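/- Let G and H be connected graphs, each with at least two vertices, of order n₁ and n₂ and having t₁ and t₂ true twin equivalence classes respectively. If dim_l(G) = n₁ − t₁ and dim_l(H) = n₂ − t₂, then dim_l(G ⊠ H) = n₁n₂ − t₁t₂. -/

import Mathlib

open SimpleGraph

/-- The strong product of two simple graphs. -/
def strongProd {α β : Type*} (G : SimpleGraph α) (H : SimpleGraph β) :
    SimpleGraph (α × β) where
  Adj x y := (x.1 = y.1 ∧ H.Adj x.2 y.2) ∨ (x.2 = y.2 ∧ G.Adj x.1 y.1) ∨
      (G.Adj x.1 y.1 ∧ H.Adj x.2 y.2)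
  symm := by
    constructor
    rintro x y (⟨h1, h2⟩ | ⟨h1, h2⟩ | ⟨h1, h2⟩)
    · exact Or.inl ⟨h1.symm, h2.symm⟩
    · exact Or.inr (Or.inl ⟨h1.symm, h2.symm⟩)
    · exact Or.inr (Or.inr ⟨h1.symm, h2.symm⟩)
  loopless := by
    constructor
    rintro x (⟨_, h⟩ | ⟨_, h⟩ | ⟨h, _⟩)
    · exact H.irrefl h
    · exact G.irrefl h
    · exact G.irrefl h

/-- A set `S` is a local metric generator for `G` if every pair of adjacent
vertices is distinguished by some element of `S`. -/
def IsLocalMetricGenerator {α : Type*} (G : SimpleGraph α) (S : Set α) : Prop :=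
  ∀ u v : α, G.Adj u v → ∃ s ∈ S, G.dist u s ≠ G.dist v s

/-- The local metric dimension of a graph. -/
noncomputable def localMetricDim {α : Type*} [Fintype α] (G : SimpleGraph α) : ℕ :=
  sInf {n | ∃ S : Finset α, S.card = n ∧ IsLocalMetricGenerator G ↑S}

/-- A set `S` is a metric generator for `G` if every pair of distinct
vertices is distinguished by some element of `S`. -/
def IsMetricGenerator {α : Type*} (G : SimpleGraph α) (S : Set α) : Prop :=
  ∀ u v : α, u ≠ v → ∃ s ∈ S, G.dist u s ≠ G.dist v s

/-- The metric dimension of a graph. -/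
noncomputable def metricDim {α : Type*} [Fintype α] (G : SimpleGraph α) : ℕ :=
  sInf {n | ∃ S : Finset α, S.card = n ∧ IsMetricGenerator G ↑S}

/-- The eccentricity of a vertex: the maximum distance to another vertex. -/
noncomputable def eccentricity {α : Type*} (G : SimpleGraph α) (v : α) : ℕ :=
  sSup {d | ∃ u, G.dist v u = d}

/-- The diameter of a graph: maximum eccentricity. -/
noncomputable def graphDiam {α : Type*} (G : SimpleGraph α) : ℕ :=
  sSup {d | ∃ v, eccentricity G v = d}

/-- The radius of a graph: minimum eccentricity. -/
noncomputable def graphRadius {α : Type*} (G : SimpleGraph α) : ℕ :=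
  sInf {d | ∃ v, eccentricity G v = d}

/-- The interval `I[x,y]`: vertices lying on some shortest `x`–`y` path. -/
def interval {α : Type*} (G : SimpleGraph α) (x y : α) : Set α :=
  {w | G.dist x w + G.dist w y = G.dist x y}

/-- A graph is adjacency `k`-resolved if for every pair of adjacent vertices
`x, y` there is a vertex `w` with `d(y,w) ≥ k` and `x ∈ I[y,w]`, or
`d(x,w) ≥ k` and `y ∈ I[x,w]`. -/
def AdjKResolved {α : Type*} (G : SimpleGraph α) (k : ℕ) : Prop :=
  ∀ x y : α, G.Adj x y →
    ∃ w : α, (k ≤ G.dist y w ∧ x ∈ interval G y w) ∨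
      (k ≤ G.dist x w ∧ y ∈ interval G x w)

/-- The true twin equivalence relation: `u ≈ v` iff `N[u] = N[v]`. -/
def trueTwinSetoid {α : Type*} (G : SimpleGraph α) : Setoid α where
  r u v := insert u (G.neighborSet u) = insert v (G.neighborSet v)
  iseqv := ⟨fun _ => rfl, Eq.symm, Eq.trans⟩


section TwinAux
variable {α β : Type*} {G : SimpleGraph α} {H : SimpleGraph β}

lemma twin_adj {u v : α} (hne : u ≠ v)
    (h : insert u (G.neighborSet u) = insert v (G.neighborSet v)) : G.Adj u v := by
  have hv : v ∈ insert u (G.neighborSet u) := by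
    rw [h]; exact Set.mem_insert _ _
  rcases Set.mem_insert_iff.mp hv with h' | h'
  · exact absurd h'.symm hne
  · exact h'

lemma twin_dist_le (hc : G.Connected) {u v s : α}
    (h : insert u (G.neighborSet u) = insert v (G.neighborSet v))
    (hsu : s ≠ u) : G.dist v s ≤ G.dist u s := by
  obtain ⟨p, hp⟩ := hc.exists_walk_length_eq_dist u s
  cases p with
  | nil => exact absurd rfl hsu.symm
  | @cons _ w _ h₁ p' =>
    rw [Walk.length_cons] at hp
    have hw : w ∈ insert v (G.neighborSet v) := by
      rw [← h]; exact Set.mem_insert_iff.mpr (Or.inr h₁)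
    rcases Set.mem_insert_iff.mp hw with hw | hw
    · rw [← hw]
      calc G.dist w s ≤ p'.length := dist_le p'
        _ ≤ p'.length + 1 := Nat.le_succ _
        _ = G.dist u s := hp
    · calc G.dist v s ≤ (Walk.cons (show G.Adj v w from hw) p').length := dist_le _
        _ = G.dist u s := by rw [Walk.length_cons]; exact hp

lemma twin_dist (hc : G.Connected) {u v s : α}
    (h : insert u (G.neighborSet u) = insert v (G.neighborSet v))
    (hsu : s ≠ u) (hsv : s ≠ v) : G.dist u s = G.dist v s :=
  le_antisymm (twin_dist_le hc h.symm hsv) (twin_dist_le hc h hsu)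

lemma layerWalk (a : α) {b d : β} (q : H.Walk b d) :
    ∃ w : (strongProd G H).Walk (a, b) (a, d), w.length = q.length := by
  induction q with
  | nil => exact ⟨Walk.nil, rfl⟩
  | @cons b' b₁ d' h q' ih =>
    obtain ⟨w, hw⟩ := ih
    have hadj : (strongProd G H).Adj (a, b') (a, b₁) := Or.inl ⟨rfl, h⟩
    exact ⟨Walk.cons hadj w, by simp [hw]⟩

lemma prodWalk {a c : α} {b d : β} (p : G.Walk a c) (q : H.Walk b d) :
    ∃ w : (strongProd G H).Walk (a, b) (c, d), w.length = max p.length q.length := by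
  induction p generalizing b q with
  | @nil a'' =>
    obtain ⟨w, hw⟩ := layerWalk (G := G) a'' q
    exact ⟨w, by simp [hw]⟩
  | @cons a' a₁ c' h p' ih =>
    cases q with
    | nil =>
      obtain ⟨w, hw⟩ := ih (Walk.nil : H.Walk d d)
      have hadj : (strongProd G H).Adj (a', d) (a₁, d) := Or.inr (Or.inl ⟨rfl, h⟩)
      exact ⟨Walk.cons hadj w, by simp [hw]⟩
    | @cons _ b₁ _ h₂ q' =>
      obtain ⟨w, hw⟩ := ih q'
      have hadj : (strongProd G H).Adj (a', b) (a₁, b₁) := Or.inr (Or.inr ⟨h, h₂⟩)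
      exact ⟨Walk.cons hadj w, by simp [hw, Nat.succ_max_succ]⟩

lemma strongProd_connected (hG : G.Connected) (hH : H.Connected) :
    (strongProd G H).Connected := by
  have : Nonempty (α × β) := ⟨hG.nonempty.some, hH.nonempty.some⟩
  refine ⟨fun x y => ?_⟩
  obtain ⟨p, -⟩ := (hG x.1 y.1).exists_walk_length_eq_dist
  obtain ⟨q, -⟩ := (hH x.2 y.2).exists_walk_length_eq_dist
  obtain ⟨w, -⟩ := prodWalk p q
  exact ⟨w⟩

lemma walk_proj_le (hG : G.Connected) (hH : H.Connected) {x y : α × β}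
    (w : (strongProd G H).Walk x y) :
    G.dist x.1 y.1 ≤ w.length ∧ H.dist x.2 y.2 ≤ w.length := by
  induction w with
  | nil => simp
  | @cons x z y h w' ih =>
    rw [Walk.length_cons]
    have h1 : G.dist x.1 z.1 ≤ 1 := by
      rcases h with ⟨he, -⟩ | ⟨-, ha⟩ | ⟨ha, -⟩
      · simp [he, dist_self]
      · calc G.dist x.1 z.1 ≤ (ha.toWalk).length := dist_le _
          _ = 1 := rfl
      · calc G.dist x.1 z.1 ≤ (ha.toWalk).length := dist_le _
          _ = 1 := rfl
    have h2 : H.dist x.2 z.2 ≤ 1 := by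
      rcases h with ⟨-, ha⟩ | ⟨he, -⟩ | ⟨-, ha⟩
      · calc H.dist x.2 z.2 ≤ (ha.toWalk).length := dist_le _
          _ = 1 := rfl
      · simp [he, dist_self]
      · calc H.dist x.2 z.2 ≤ (ha.toWalk).length := dist_le _
          _ = 1 := rfl
    constructor
    · calc G.dist x.1 y.1 ≤ G.dist x.1 z.1 + G.dist z.1 y.1 := hG.dist_triangle
        _ ≤ 1 + w'.length := Nat.add_le_add h1 ih.1
        _ = w'.length + 1 := Nat.add_comm _ _
    · calc H.dist x.2 y.2 ≤ H.dist x.2 z.2 + H.dist z.2 y.2 := hH.dist_triangle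
        _ ≤ 1 + w'.length := Nat.add_le_add h2 ih.2
        _ = w'.length + 1 := Nat.add_comm _ _

lemma strongProd_dist (hG : G.Connected) (hH : H.Connected) (x y : α × β) :
    (strongProd G H).dist x y = max (G.dist x.1 y.1) (H.dist x.2 y.2) := by
  apply le_antisymm
  · obtain ⟨p, hp⟩ := (hG x.1 y.1).exists_walk_length_eq_dist
    obtain ⟨q, hq⟩ := (hH x.2 y.2).exists_walk_length_eq_dist
    obtain ⟨w, hw⟩ := prodWalk p q
    calc (strongProd G H).dist x y ≤ w.length := dist_le _
      _ = max (G.dist x.1 y.1) (H.dist x.2 y.2) := by rw [hw, hp, hq]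
  · obtain ⟨w, hw⟩ := ((strongProd_connected hG hH) x y).exists_walk_length_eq_dist
    have := walk_proj_le hG hH w
    rw [hw] at this
    exact max_le this.1 this.2

lemma strongProd_closedNbhd (x : α × β) :
    insert x ((strongProd G H).neighborSet x) =
      (insert x.1 (G.neighborSet x.1)) ×ˢ (insert x.2 (H.neighborSet x.2)) := by
  ext ⟨c, d⟩
  simp only [Set.mem_insert_iff, mem_neighborSet, Set.mem_prod, Prod.ext_iff, strongProd]
  constructor
  · rintro (⟨h1, h2⟩ | (⟨h1, h2⟩ | ⟨h1, h2⟩ | ⟨h1, h2⟩)) <;> tauto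
  · rintro ⟨h1 | h1, h2 | h2⟩ <;> subst_vars <;> tauto

lemma univ_gen {γ : Type*} [Fintype γ] {K : SimpleGraph γ} (hc : K.Connected) :
    IsLocalMetricGenerator K (↑(Finset.univ : Finset γ)) := by
  intro u v huv
  refine ⟨u, by simp, ?_⟩
  rw [dist_self]
  have := hc.pos_dist_of_ne (u := v) (v := u) huv.ne'
  omega

lemma exists_min_gen {γ : Type*} [Fintype γ] {K : SimpleGraph γ} (hc : K.Connected) :
    ∃ S : Finset γ, S.card = localMetricDim K ∧ IsLocalMetricGenerator K ↑S := by
  have hne : {n | ∃ S : Finset γ, S.card = n ∧ IsLocalMetricGenerator K ↑S}.Nonempty :=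
    ⟨(Finset.univ : Finset γ).card, Finset.univ, rfl, univ_gen hc⟩
  obtain ⟨S, hS1, hS2⟩ := Nat.sInf_mem hne
  exact ⟨S, hS1, hS2⟩

lemma card_quot_le {γ : Type*} [Fintype γ] (K : SimpleGraph γ) :
    Nat.card (Quotient (trueTwinSetoid K)) ≤ Fintype.card γ := by
  rw [← Nat.card_eq_fintype_card]
  exact Nat.card_le_card_of_surjective _ Quotient.exists_rep

lemma lower_prod [Fintype α] [Fintype β] (hG : G.Connected) (hH : H.Connected)
    (S : Finset (α × β)) (hS : IsLocalMetricGenerator (strongProd G H) ↑S) :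
    Fintype.card α * Fintype.card β
      - Nat.card (Quotient (trueTwinSetoid G)) * Nat.card (Quotient (trueTwinSetoid H))
      ≤ S.card := by
  classical
  set T := Sᶜ with hT
  have hinj : Function.Injective
      (fun x : {x // x ∈ T} => ((Quotient.mk (trueTwinSetoid G) x.1.1),
        (Quotient.mk (trueTwinSetoid H) x.1.2))) := by
    rintro ⟨x, hx⟩ ⟨y, hy⟩ hxy
    simp only [Prod.mk.injEq] at hxy
    have h1 : insert x.1 (G.neighborSet x.1) = insert y.1 (G.neighborSet y.1) :=
      Quotient.exact hxy.1
    have h2 : insert x.2 (H.neighborSet x.2) = insert y.2 (H.neighborSet y.2) :=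
      Quotient.exact hxy.2
    have htwin : insert x ((strongProd G H).neighborSet x)
        = insert y ((strongProd G H).neighborSet y) := by
      rw [strongProd_closedNbhd, strongProd_closedNbhd, h1, h2]
    by_contra hne
    have hne' : x ≠ y := fun h => hne (Subtype.ext h)
    obtain ⟨s, hsS, hsd⟩ := hS x y (twin_adj hne' htwin)
    have hsS' : s ∈ S := hsS
    have hxS : x ∉ S := by simpa [hT] using hx
    have hyS : y ∉ S := by simpa [hT] using hy
    have hsx : s ≠ x := fun h => hxS (h ▸ hsS')
    have hsy : s ≠ y := fun h => hyS (h ▸ hsS')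
    exact hsd (twin_dist (strongProd_connected hG hH) htwin hsx hsy)
  have hcard : T.card ≤ Nat.card (Quotient (trueTwinSetoid G)) *
      Nat.card (Quotient (trueTwinSetoid H)) := by
    have := Nat.card_le_card_of_injective _ hinj
    simpa [Nat.card_eq_fintype_card, Fintype.card_coe, Nat.card_prod] using this
  have h5 : S.card ≤ Fintype.card (α × β) := by
    simpa using S.card_le_univ
  have h6 : T.card = Fintype.card (α × β) - S.card := by
    simp [hT, Finset.card_compl]
  rw [Fintype.card_prod] at h5 h6
  omega

lemma upper_gen [Fintype α] [Fintype β] [DecidableEq α] [DecidableEq β] (hG : G.Connected) (hH : H.Connected)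
    {S₁ : Finset α} {S₂ : Finset β}
    (h₁ : IsLocalMetricGenerator G ↑S₁) (h₂ : IsLocalMetricGenerator H ↑S₂) :
    IsLocalMetricGenerator (strongProd G H)
      ↑((S₁ ×ˢ (Finset.univ : Finset β)) ∪ ((Finset.univ : Finset α) ×ˢ S₂)) := by
  classical
  rintro ⟨a, b⟩ ⟨c, d⟩ hadj
  have dist_eq := strongProd_dist (G := G) (H := H) hG hH
  rcases hadj with ⟨he, hbd⟩ | ⟨he, hac⟩ | ⟨hac, hbd⟩
  · have he' : a = c := he
    subst he'
    have hbd' : H.Adj b d := hbd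
    obtain ⟨y, hy, hyd⟩ := h₂ b d hbd'
    have hy' : y ∈ S₂ := hy
    refine ⟨(a, y), Finset.mem_coe.mpr (by simp [hy']), ?_⟩
    rw [dist_eq, dist_eq]
    simpa [SimpleGraph.dist_self] using hyd
  · have he' : b = d := he
    subst he'
    have hac' : G.Adj a c := hac
    obtain ⟨x, hx, hxd⟩ := h₁ a c hac'
    have hx' : x ∈ S₁ := hx
    refine ⟨(x, b), Finset.mem_coe.mpr (by simp [hx']), ?_⟩
    rw [dist_eq, dist_eq]
    simpa [SimpleGraph.dist_self] using hxd
  · have hac' : G.Adj a c := hac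
    have hbd' : H.Adj b d := hbd
    obtain ⟨x, hx, hxd⟩ := h₁ a c hac'
    have hx' : x ∈ S₁ := hx
    have hd1 : G.dist a c = 1 := dist_eq_one_iff_adj.mpr hac'
    have hd1' : G.dist c a = 1 := by rw [SimpleGraph.dist_comm]; exact hd1
    have t1 : G.dist a x ≤ G.dist c x + 1 := by
      have := hG.dist_triangle (u := a) (v := c) (w := x)
      rw [hd1] at this; omega
    have t2 : G.dist c x ≤ G.dist a x + 1 := by
      have := hG.dist_triangle (u := c) (v := a) (w := x)
      rw [hd1'] at this; omega
    have hH1 : H.dist b d = 1 := dist_eq_one_iff_adj.mpr hbd'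
    have hH1' : H.dist d b = 1 := by rw [SimpleGraph.dist_comm]; exact hH1
    rcases Nat.lt_or_ge (G.dist c x) (G.dist a x) with hlt | hge
    · refine ⟨(x, d), Finset.mem_coe.mpr (by simp [hx']), ?_⟩
      rw [dist_eq, dist_eq]
      simp only [hH1, SimpleGraph.dist_self]
      omega
    · have hlt' : G.dist a x < G.dist c x := by
        rcases Nat.lt_or_ge (G.dist a x) (G.dist c x) with h | h
        · exact h
        · exact absurd (Nat.le_antisymm hge h) hxd
      refine ⟨(x, b), Finset.mem_coe.mpr (by simp [hx']), ?_⟩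
      rw [dist_eq, dist_eq]
      simp only [hH1', SimpleGraph.dist_self]
      omega

end TwinAux

/-- if `dim_l(G) = n₁ − t₁` and `dim_l(H) = n₂ − t₂`, then
`dim_l(G ⊠ H) = n₁n₂ − t₁t₂`. -/
theorem stmt6 {α β : Type*} [Fintype α] [Fintype β]
    (G : SimpleGraph α) (H : SimpleGraph β)
    (hG : G.Connected) (hH : H.Connected)
    (hn1 : 2 ≤ Fintype.card α) (hn2 : 2 ≤ Fintype.card β)
    (t1 t2 : ℕ)
    (ht1 : Nat.card (Quotient (trueTwinSetoid G)) = t1)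
    (ht2 : Nat.card (Quotient (trueTwinSetoid H)) = t2)
    (hdimG : localMetricDim G = Fintype.card α - t1)
    (hdimH : localMetricDim H = Fintype.card β - t2) :
    localMetricDim (strongProd G H) = Fintype.card α * Fintype.card β - t1 * t2 := by
    classical
  obtain ⟨S₁, hS₁card, hS₁⟩ := exists_min_gen hG
  obtain ⟨S₂, hS₂card, hS₂⟩ := exists_min_gen hH
  rw [hdimG] at hS₁card
  rw [hdimH] at hS₂card
  have ht1n : t1 ≤ Fintype.card α := ht1 ▸ card_quot_le G
  have ht2n : t2 ≤ Fintype.card β := ht2 ▸ card_quot_le H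
  set S : Finset (α × β) := (S₁ ×ˢ Finset.univ) ∪ (Finset.univ ×ˢ S₂) with hSdef
  have hcompl : Sᶜ = S₁ᶜ ×ˢ S₂ᶜ := by
    ext ⟨x, y⟩
    simp [hSdef]
  have hc1 : S₁ᶜ.card = t1 := by
    rw [Finset.card_compl, hS₁card]
    omega
  have hc2 : S₂ᶜ.card = t2 := by
    rw [Finset.card_compl, hS₂card]
    omega
  have hScard : S.card = Fintype.card α * Fintype.card β - t1 * t2 := by
    have e1 : Sᶜ.card = t1 * t2 := by
      rw [hcompl, Finset.card_product, hc1, hc2]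
    have e2 : Sᶜ.card = Fintype.card (α × β) - S.card := by
      simp [Finset.card_compl]
    have e3 : S.card ≤ Fintype.card (α × β) := by simpa using S.card_le_univ
    rw [Fintype.card_prod] at e2 e3
    have e4 : t1 * t2 ≤ Fintype.card α * Fintype.card β :=
      Nat.mul_le_mul ht1n ht2n
    omega
  have hupper : localMetricDim (strongProd G H) ≤
      Fintype.card α * Fintype.card β - t1 * t2 := by
    rw [← hScard]
    exact Nat.sInf_le ⟨S, rfl, upper_gen hG hH hS₁ hS₂⟩
  have hlower : Fintype.card α * Fintype.card β - t1 * t2 ≤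
      localMetricDim (strongProd G H) := by
    obtain ⟨S₀, hc0, hg0⟩ := exists_min_gen (strongProd_connected hG hH)
    rw [← hc0]
    have := lower_prod hG hH S₀ hg0
    rw [ht1, ht2] at this
    exact this
  omega
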